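/- Let p₁, p₂, …, pₙ be points in ℝ² with pᵢ ≠ pᵢ₊₁ for every i. The polygonal path on p₁, …, pₙ is self-approaching if and only if for all indices i, j with 2 ≤ i < j ≤ n, the inner product ⟪p_j − p_i, p_i − p_{i−1}⟫ is nonnegative (equivalently, p_j lies in the closed half-plane l⁺(p_{i−1}, p_i)). -/

import Mathlib

/-- The point of the polygonal path `p 0, p 1, …` lying on segment `i`
(from `p i` to `p (i+1)`) at fraction `s ∈ [0,1]`. -/
noncomputable def polyPt (p : ℕ → EuclideanSpace ℝ (Fin 2)) (i : ℕ) (s : ℝ) :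
    EuclideanSpace ℝ (Fin 2) :=
  (1 - s) • p i + s • p (i + 1)

/-- `(i, s)` comes no later than `(j, t)` in the lexicographic order on parameters
of points of a polygonal path. -/
def ParamLE (i : ℕ) (s : ℝ) (j : ℕ) (t : ℝ) : Prop :=
  i < j ∨ (i = j ∧ s ≤ t)

/-- The polygonal path on the points `p 0, …, p m` (with `m` segments, indexed
`0, …, m-1`) is self-approaching: for any three of its points `a, b, c` in order
along the path, `dist a c ≥ dist b c`. -/
def IsSelfApproachingPoly (m : ℕ) (p : ℕ → EuclideanSpace ℝ (Fin 2)) : Prop :=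
  ∀ (i j k : ℕ) (s t u : ℝ), i < m → j < m → k < m →
    s ∈ Set.Icc (0 : ℝ) 1 → t ∈ Set.Icc (0 : ℝ) 1 → u ∈ Set.Icc (0 : ℝ) 1 →
    ParamLE i s j t → ParamLE j t k u →
    dist (polyPt p j t) (polyPt p k u) ≤ dist (polyPt p i s) (polyPt p k u)

/-- The polygonal path on the points `p 0, …, p m` has increasing chords: for any
four of its points `a, b, c, d` in order along the path, `dist a d ≥ dist b c`. -/
def IsIncreasingChordsPoly (m : ℕ) (p : ℕ → EuclideanSpace ℝ (Fin 2)) : Prop :=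
  ∀ (i j k l : ℕ) (s t u v : ℝ), i < m → j < m → k < m → l < m →
    s ∈ Set.Icc (0 : ℝ) 1 → t ∈ Set.Icc (0 : ℝ) 1 → u ∈ Set.Icc (0 : ℝ) 1 →
    v ∈ Set.Icc (0 : ℝ) 1 →
    ParamLE i s j t → ParamLE j t k u → ParamLE k u l v →
    dist (polyPt p j t) (polyPt p k u) ≤ dist (polyPt p i s) (polyPt p l v)


open scoped RealInnerProductSpace

private lemma normsq_expand (a d : EuclideanSpace ℝ (Fin 2)) (ε : ℝ) :
    ‖a - ε • d‖ ^ 2 = ‖a‖^2 - 2*ε*⟪a,d⟫ + ε^2*‖d‖^2 := by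
  rw [norm_sub_sq_real, real_inner_smul_right, norm_smul]
  simp [mul_pow, sq_abs]; ring

private lemma norm_le_of_sq (a b : EuclideanSpace ℝ (Fin 2)) (h : ‖a‖^2 ≤ ‖b‖^2) :
    ‖a‖ ≤ ‖b‖ :=
  (pow_le_pow_iff_left₀ (norm_nonneg a) (norm_nonneg b) two_ne_zero).1 h

private lemma segKey (c x d : EuclideanSpace ℝ (Fin 2)) (s t : ℝ) (hst : s ≤ t) (ht : t ≤ 1)
    (h : 0 ≤ ⟪c - (x + d), d⟫) : ‖c - (x + t • d)‖ ≤ ‖c - (x + s • d)‖ := by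
  have e1 : c - (x + t • d) = (c - x) - t • d := by abel
  have e2 : c - (x + s • d) = (c - x) - s • d := by abel
  have h' : 0 ≤ ⟪c - x, d⟫ - ‖d‖^2 := by
    have e3 : c - (x + d) = (c - x) - d := by abel
    rw [e3, inner_sub_left, real_inner_self_eq_norm_sq] at h
    linarith
  rw [e1, e2]
  apply norm_le_of_sq
  rw [normsq_expand, normsq_expand]
  nlinarith [norm_nonneg d, sq_nonneg (t - s), mul_nonneg (sub_nonneg.2 hst) h',
    mul_nonneg (mul_nonneg (sub_nonneg.2 hst) (by nlinarith : (0:ℝ) ≤ 2 - t - s)) (sq_nonneg ‖d‖)]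

private lemma polyPt_eqv (p : ℕ → EuclideanSpace ℝ (Fin 2)) (i : ℕ) (s : ℝ) :
    polyPt p i s = p i + s • (p (i+1) - p i) := by
  unfold polyPt; module

private lemma sameSeg (p : ℕ → EuclideanSpace ℝ (Fin 2)) (k : ℕ) (s t u : ℝ)
    (hst : s ≤ t) (htu : t ≤ u) :
    dist (polyPt p k t) (polyPt p k u) ≤ dist (polyPt p k s) (polyPt p k u) := by
  rw [dist_eq_norm, dist_eq_norm]
  have e : ∀ r : ℝ, polyPt p k r - polyPt p k u = (r - u) • (p (k+1) - p k) := by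
    intro r; unfold polyPt; module
  rw [e, e, norm_smul, norm_smul]
  have : |t - u| ≤ |s - u| := by
    rw [abs_sub_comm t u, abs_sub_comm s u, abs_of_nonneg (by linarith),
      abs_of_nonneg (by linarith)]
    linarith
  exact mul_le_mul_of_nonneg_right this (norm_nonneg _)

section ChainSec
variable (m : ℕ) (p : ℕ → EuclideanSpace ℝ (Fin 2))
  (H : ∀ i j : ℕ, 1 ≤ i → i < j → j ≤ m → 0 ≤ (inner ℝ (p j - p i) (p i - p (i - 1)) : ℝ))

include H in
private lemma innerCond (i k : ℕ) (u : ℝ) (hik : i < k) (hk : k < m)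
    (hu : u ∈ Set.Icc (0:ℝ) 1) :
    0 ≤ ⟪polyPt p k u - p (i+1), p (i+1) - p i⟫ := by
  have e : polyPt p k u - p (i+1)
      = (1-u) • (p k - p (i+1)) + u • (p (k+1) - p (i+1)) := by
    unfold polyPt; module
  rw [e, inner_add_left, real_inner_smul_left, real_inner_smul_left]
  have h1 : 0 ≤ ⟪p k - p (i+1), p (i+1) - p i⟫ := by
    rcases eq_or_lt_of_le (show i + 1 ≤ k from hik) with h | h
    · simp [← h]
    · simpa using H (i+1) k (by omega) h (by omega)
  have h2 : 0 ≤ ⟪p (k+1) - p (i+1), p (i+1) - p i⟫ := by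
    simpa using H (i+1) (k+1) (by omega) (by omega) (by omega)
  have g1 := mul_nonneg (by linarith [hu.2] : (0:ℝ) ≤ 1 - u) h1
  have g2 := mul_nonneg hu.1 h2
  linarith

include H in
private lemma segMonoLt (i k : ℕ) (u s t : ℝ) (hik : i < k) (hk : k < m)
    (hu : u ∈ Set.Icc (0:ℝ) 1) (hst : s ≤ t) (ht : t ≤ 1) :
    dist (polyPt p i t) (polyPt p k u) ≤ dist (polyPt p i s) (polyPt p k u) := by
  rw [dist_eq_norm, dist_eq_norm, norm_sub_rev, norm_sub_rev (polyPt p i s)]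
  rw [polyPt_eqv p i t, polyPt_eqv p i s]
  apply segKey _ _ _ s t hst ht
  have e : p i + (p (i+1) - p i) = p (i+1) := by abel
  rw [e]
  exact innerCond m p H i k u hik hk hu

include H in
private lemma chainLem (k : ℕ) (u : ℝ) (hk : k < m) (hu : u ∈ Set.Icc (0:ℝ) 1) :
    ∀ (n i : ℕ) (s t : ℝ), i + n ≤ k → s ∈ Set.Icc (0:ℝ) 1 → t ∈ Set.Icc (0:ℝ) 1 →
    ParamLE i s (i + n) t → ParamLE (i + n) t k u →
    dist (polyPt p (i + n) t) (polyPt p k u) ≤ dist (polyPt p i s) (polyPt p k u) := by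
  intro n
  induction n with
  | zero =>
    intro i s t hik hs ht h1 h2
    have hst : s ≤ t := (h1.resolve_left (by omega)).2
    simp only [Nat.add_zero] at *
    rcases eq_or_lt_of_le hik with h | h
    · subst h
      have htu : t ≤ u := (h2.resolve_left (by omega)).2
      exact sameSeg p _ s t u hst htu
    · exact segMonoLt m p H i k u s t h hk hu hst ht.2
  | succ n ih =>
    intro i s t hik hs ht h1 h2
    have step1 : dist (polyPt p (i + (n+1)) t) (polyPt p k u)
        ≤ dist (polyPt p (i + (n+1)) 0) (polyPt p k u) := by
      rcases eq_or_lt_of_le hik with h | h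
      · have htu : t ≤ u := (h2.resolve_left (by omega)).2
        subst h
        exact sameSeg p _ 0 t u ht.1 htu
      · exact segMonoLt m p H _ k u 0 t h hk hu ht.1 ht.2
    have e : polyPt p (i + (n+1)) 0 = polyPt p (i + n) 1 := by
      unfold polyPt
      have h : i + (n+1) = (i + n) + 1 := by omega
      rw [h]
      module
    rw [e] at step1
    refine step1.trans (ih i s 1 (by omega) hs (by norm_num) ?_ ?_)
    · rcases Nat.eq_zero_or_pos n with h | h
      · exact Or.inr ⟨by omega, hs.2⟩
      · exact Or.inl (by omega)
    · exact Or.inl (by omega)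

end ChainSec

/-- Corollary: a polygonal path `p 0, …, p m` (1-indexed `p₁, …, pₙ` with `n = m+1`)
is self-approaching iff for all `1 ≤ i < j ≤ m`, the point `p j` lies in the closed
half-plane `l⁺(p (i-1), p i)`, i.e. `⟪p j - p i, p i - p (i-1)⟫ ≥ 0`. -/
theorem isSelfApproachingPoly_iff_inner_nonneg (m : ℕ)
    (p : ℕ → EuclideanSpace ℝ (Fin 2)) (hne : ∀ i < m, p i ≠ p (i + 1)) :
    IsSelfApproachingPoly m p ↔
      ∀ i j : ℕ, 1 ≤ i → i < j → j ≤ m →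
        0 ≤ (inner ℝ (p j - p i) (p i - p (i - 1)) : ℝ) := by
  constructor
  · -- self-approaching → inner nonneg
    intro H i j hi hij hjm
    by_contra hI
    push_neg at hI
    have him : i - 1 < m := by omega
    have hjm' : j - 1 < m := by omega
    have hii : i - 1 + 1 = i := by omega
    have hjj : j - 1 + 1 = j := by omega
    have hd : p (i-1) ≠ p i := by
      have := hne (i-1) him
      rwa [hii] at this
    set d : EuclideanSpace ℝ (Fin 2) := p i - p (i-1) with hdd
    set I : ℝ := ⟪p j - p i, d⟫ with hII
    have hN : (0:ℝ) < ‖d‖^2 := by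
      have h0 : d ≠ 0 := sub_ne_zero.mpr hd.symm
      exact pow_pos (norm_pos_iff.mpr h0) 2
    set ε : ℝ := min 1 (-I / ‖d‖^2) with hεdef
    have hε0 : 0 < ε := lt_min one_pos (div_pos (neg_pos.2 hI) hN)
    have hε1 : ε ≤ 1 := min_le_left _ _
    have hεN : ε * ‖d‖^2 ≤ -I := by
      have := min_le_right 1 (-I / ‖d‖^2)
      calc ε * ‖d‖^2 ≤ (-I / ‖d‖^2) * ‖d‖^2 :=
            mul_le_mul_of_nonneg_right this hN.le
        _ = -I := div_mul_cancel₀ _ hN.ne'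
    have key := H (i-1) (i-1) (j-1) (1-ε) 1 1 him him hjm'
      ⟨by linarith, by linarith⟩ ⟨by norm_num, le_refl 1⟩ ⟨by norm_num, le_refl 1⟩
      (Or.inr ⟨rfl, by linarith⟩) (Or.inl (by omega))
    have e1 : polyPt p (i-1) 1 = p i := by simp [polyPt, hii]
    have e2 : polyPt p (j-1) 1 = p j := by simp [polyPt, hjj]
    have e3 : polyPt p (i-1) (1-ε) = p i - ε • d := by
      unfold polyPt
      rw [hii, hdd]
      module
    rw [e1, e2, e3, dist_eq_norm, dist_eq_norm] at key
    have e4 : p i - ε • d - p j = (p i - p j) - ε • d := by abel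
    rw [e4] at key
    have key2 : ‖p i - p j‖^2 ≤ ‖(p i - p j) - ε • d‖^2 :=
      pow_le_pow_left₀ (norm_nonneg _) key 2
    rw [normsq_expand] at key2
    have e5 : ⟪p i - p j, d⟫ = -I := by
      rw [hII, show p i - p j = -(p j - p i) by abel, inner_neg_left]
    rw [e5] at key2
    nlinarith [mul_le_mul_of_nonneg_left hεN hε0.le, mul_pos hε0 (neg_pos.2 hI)]
  · -- inner nonneg → self-approaching
    intro H i j k s t u him hjm hkm hs ht hu h1 h2
    have hij : i ≤ j := by rcases h1 with h | ⟨h, _⟩ <;> omega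
    obtain ⟨n, rfl⟩ : ∃ n, j = i + n := ⟨j - i, by omega⟩
    have hjk : i + n ≤ k := by rcases h2 with h | ⟨h, _⟩ <;> omega
    exact chainLem m p H k u hkm hu n i s t hjk hs ht h1 h2
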